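/- Sub-additivity: for strictly positive ρ₁, ρ₂, σ₁, σ₂ and operator convex f, S_f(ρ₁+ρ₂ ‖ σ₁+σ₂) ≤ S_f(ρ₁‖σ₁) + S_f(ρ₂‖σ₂). -/

import Mathlib

open Matrix Kronecker
open scoped ComplexOrder

noncomputable def applyFun {n : Type*} [Fintype n] [DecidableEq n]
    (f : ℝ → ℝ) (A : Matrix n n ℂ) : Matrix n n ℂ := by
  classical exact
    if hA : A.IsHermitian then
      (hA.eigenvectorUnitary : Matrix n n ℂ) *
        Matrix.diagonal (fun i => (f (hA.eigenvalues i) : ℂ)) *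
        (star (hA.eigenvectorUnitary : Matrix n n ℂ))
    else 0

noncomputable def msqrt {n : Type*} [Fintype n] [DecidableEq n]
    (A : Matrix n n ℂ) : Matrix n n ℂ := by
  classical exact if h : A.PosSemidef then
    (h.1.eigenvectorUnitary : Matrix n n ℂ) *
      Matrix.diagonal ((↑) ∘ (Real.sqrt ·) ∘ h.1.eigenvalues) *
      (star (h.1.eigenvectorUnitary : Matrix n n ℂ)) else 0

def vecOf {m n : Type*} (A : Matrix m n ℂ) : m × n → ℂ := fun p => A p.1 p.2

noncomputable def Srel {n : Type*} [Fintype n] [DecidableEq n]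
    (f : ℝ → ℝ) (ρ σ : Matrix n n ℂ) : ℝ :=
  (star (vecOf (msqrt ρ)) ⬝ᵥ (applyFun f (σ ⊗ₖ (ρ⁻¹)ᵀ) *ᵥ vecOf (msqrt ρ))).re

def OperatorConvexOn (I : Set ℝ) (f : ℝ → ℝ) : Prop :=
  ∀ (n : ℕ) (A B : Matrix (Fin n) (Fin n) ℂ) (hA : A.IsHermitian) (hB : B.IsHermitian),
    (∀ i, hA.eigenvalues i ∈ I) → (∀ i, hB.eigenvalues i ∈ I) →
    ∀ lam : ℝ, 0 ≤ lam → lam ≤ 1 →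
      ((lam : ℂ) • applyFun f A + ((1 - lam : ℝ) : ℂ) • applyFun f B -
        applyFun f ((lam : ℂ) • A + ((1 - lam : ℝ) : ℂ) • B)).PosSemidef

noncomputable def entf {n : Type*} [Fintype n] [DecidableEq n]
    (f : ℝ → ℝ) (ρ : Matrix n n ℂ) : ℝ :=
  -(Matrix.trace (ρ * applyFun f ρ⁻¹)).re

noncomputable def ptraceB {α β : Type*} [Fintype β]
    (M : Matrix (α × β) (α × β) ℂ) : Matrix α α ℂ :=
  Matrix.of fun i j => ∑ k, M (i, k) (j, k)

noncomputable def ptraceA {α β : Type*} [Fintype α]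
    (M : Matrix (α × β) (α × β) ℂ) : Matrix β β ℂ :=
  Matrix.of fun i j => ∑ k, M (k, i) (k, j)

def NonAffineOn (I : Set ℝ) (f : ℝ → ℝ) : Prop :=
  ¬ ∃ c b : ℝ, ∀ t ∈ I, f t = c * t + b

section AuxSpectral

open Polynomial

variable {n : Type*} [Fintype n] [DecidableEq n]

lemma aeval_diagonal' (q : ℂ[X]) (μ : n → ℂ) :
    aeval (Matrix.diagonal μ) q = Matrix.diagonal fun i => q.eval (μ i) := by
  have h := aeval_algHom_apply ((Matrix.diagonalAlgHom ℂ : (n → ℂ) →ₐ[ℂ] Matrix n n ℂ)) μ q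
  simp only [Matrix.diagonalAlgHom_apply] at h
  rw [h]
  have h3 : (aeval μ) q = fun i => q.eval (μ i) := by
    funext i
    have h2 := aeval_algHom_apply (Pi.evalAlgHom ℂ (fun _ : n => ℂ) i) μ q
    simp only [Pi.evalAlgHom_apply] at h2
    rw [← h2, aeval_def, eval₂_eq_eval_map]
    simp
  rw [h3]

/-- conjugation by a unitary commutes with `aeval`. -/
lemma matAeval_conj (q : ℂ[X]) (U M : Matrix n n ℂ)
    (hU : U ∈ Matrix.unitaryGroup n ℂ) :
    aeval (U * M * star U) q = U * aeval M q * star U := by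
  have hU1 : U * star U = 1 := Matrix.mem_unitaryGroup_iff.mp hU
  have hU2 : star U * U = 1 := Matrix.mem_unitaryGroup_iff'.mp hU
  let φ : Matrix n n ℂ →ₐ[ℂ] Matrix n n ℂ :=
  { toFun := fun X => U * X * star U
    map_one' := by simp [hU1]
    map_mul' := fun X Y => by
      calc U * (X * Y) * star U = U * X * (star U * U) * Y * star U := by
            rw [hU2]; noncomm_ring
        _ = U * X * star U * (U * Y * star U) := by noncomm_ring
    map_zero' := by simp
    map_add' := fun X Y => by noncomm_ring
    commutes' := fun r => by
      simp [Algebra.algebraMap_eq_smul_one, Matrix.mul_smul, Matrix.smul_mul, hU1] }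
  exact aeval_algHom_apply φ M q

/-- Well-definedness of `applyFun`: it can be computed from any unitary
diagonalization with real diagonal. -/
lemma applyFun_eq_conj (f : ℝ → ℝ) {A : Matrix n n ℂ} (U : Matrix n n ℂ)
    (hU : U ∈ Matrix.unitaryGroup n ℂ) (g : n → ℝ)
    (hA : A = U * Matrix.diagonal (fun i => (g i : ℂ)) * star U) :
    applyFun f A = U * Matrix.diagonal (fun i => (f (g i) : ℂ)) * star U := by
  classical
  have hAh : A.IsHermitian := by
    rw [hA]
    apply Matrix.isHermitian_mul_mul_conjTranspose
    exact Matrix.isHermitian_diagonal_of_self_adjoint _ (by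
      funext i; simpa using Complex.conj_ofReal (g i))
  -- the finite set of relevant real numbers
  set s : Finset ℝ := (Finset.univ.image hAh.eigenvalues) ∪ (Finset.univ.image g) with hs
  set p : ℝ[X] := Lagrange.interpolate s id f with hp
  set q : ℂ[X] := p.map (algebraMap ℝ ℂ) with hq
  have hqeval : ∀ t : ℝ, t ∈ s → q.eval (t : ℂ) = ((f t : ℝ) : ℂ) := by
    intro t ht
    have hcoe : ((t : ℝ) : ℂ) = algebraMap ℝ ℂ t := rfl
    have hev : Polynomial.eval t p = f t := by
      exact Lagrange.eval_interpolate_at_node f (Set.injOn_id _) ht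
    rw [hq, hcoe, eval_map, eval₂_at_apply, hev]
    rfl
  have key : ∀ (W : Matrix n n ℂ), W ∈ Matrix.unitaryGroup n ℂ → ∀ h : n → ℝ,
      (∀ i, h i ∈ s) →
      aeval (W * Matrix.diagonal (fun i => (h i : ℂ)) * star W) q
        = W * Matrix.diagonal (fun i => (f (h i) : ℂ)) * star W := by
    intro W hW h hh
    rw [matAeval_conj _ _ _ hW, aeval_diagonal']
    have h4 : (fun i => q.eval ((h i : ℝ) : ℂ)) = fun i => ((f (h i) : ℝ) : ℂ) :=
      funext fun i => hqeval (h i) (hh i)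
    rw [h4]
  have heig : ∀ i, hAh.eigenvalues i ∈ s := fun i => by
    simp [hs, Finset.mem_union, Finset.mem_image]
  have hg : ∀ i, g i ∈ s := fun i => by
    simp [hs, Finset.mem_union, Finset.mem_image]
  have hspec := hAh.spectral_theorem
  have h1 := key _ (hAh.eigenvectorUnitary).2 hAh.eigenvalues heig
  have h2 := key U hU g hg
  have hAeq : A = (hAh.eigenvectorUnitary : Matrix n n ℂ) *
      Matrix.diagonal (fun i => ((hAh.eigenvalues i : ℝ) : ℂ)) *
      star (hAh.eigenvectorUnitary : Matrix n n ℂ) := by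
    rw [Unitary.conjStarAlgAut_apply] at hspec
    convert hspec using 3 <;> rfl
  have : applyFun f A = (hAh.eigenvectorUnitary : Matrix n n ℂ) *
      Matrix.diagonal (fun i => ((f (hAh.eigenvalues i) : ℝ) : ℂ)) *
      star (hAh.eigenvectorUnitary : Matrix n n ℂ) := by
    rw [applyFun, dif_pos hAh]
  rw [this, ← h1, ← hAeq, hA, h2]

end AuxSpectral

section AuxPosDef

variable {n : Type*} [Fintype n] [DecidableEq n]

lemma posDef_conj_isUnit {A B : Matrix n n ℂ} (hA : A.PosDef) (hB : IsUnit B) :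
    (Bᴴ * A * B).PosDef := by
  refine Matrix.posDef_iff_dotProduct_mulVec.mpr
    ⟨Matrix.isHermitian_conjTranspose_mul_mul _ hA.1, fun x hx => ?_⟩
  have hinj : Function.Injective B.mulVec := Matrix.mulVec_injective_iff_isUnit.mpr hB
  have hx' : B *ᵥ x ≠ 0 := by
    intro h0
    exact hx (hinj (by simpa using h0))
  have := hA.dotProduct_mulVec_pos hx'
  simpa only [Matrix.star_mulVec, Matrix.dotProduct_mulVec, Matrix.vecMul_vecMul] using this

lemma conj_dot_eq {A B : Matrix n n ℂ} (x : n → ℂ) :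
    star x ⬝ᵥ ((Bᴴ * A * B) *ᵥ x) = star (B *ᵥ x) ⬝ᵥ (A *ᵥ (B *ᵥ x)) := by
  simp only [Matrix.star_mulVec, Matrix.dotProduct_mulVec, Matrix.vecMul_vecMul,
    ← Matrix.mulVec_mulVec]

lemma star_sum_elim {α β : Type*} (x : α → ℂ) (y : β → ℂ) :
    star (Sum.elim x y) = Sum.elim (star x) (star y) := by
  funext i; cases i <;> rfl

lemma posDef_fromBlocks {m₁ m₂ : Type*} [Fintype m₁] [Fintype m₂]
    [DecidableEq m₁] [DecidableEq m₂] {A : Matrix m₁ m₁ ℂ} {B : Matrix m₂ m₂ ℂ}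
    (hA : A.PosDef) (hB : B.PosDef) : (Matrix.fromBlocks A 0 0 B).PosDef := by
  rw [Matrix.posDef_iff_dotProduct_mulVec]
  constructor
  · unfold Matrix.IsHermitian
    rw [Matrix.fromBlocks_conjTranspose]
    simp [hA.1.eq, hB.1.eq]
  · intro x hx
    have hxe : x = Sum.elim (x ∘ Sum.inl) (x ∘ Sum.inr) := (Sum.elim_comp_inl_inr x).symm
    rw [hxe, Matrix.fromBlocks_mulVec, star_sum_elim]
    simp only [Matrix.zero_mulVec, add_zero, zero_add]
    rw [sumElim_dotProduct_sumElim]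
    have hne : x ∘ Sum.inl ≠ 0 ∨ x ∘ Sum.inr ≠ 0 := by
      by_contra h
      push_neg at h
      apply hx
      rw [hxe, h.1, h.2]
      simp
    rcases hne with h | h
    · exact add_pos_of_pos_of_nonneg (hA.dotProduct_mulVec_pos h)
        (hB.posSemidef.dotProduct_mulVec_nonneg _)
    · exact add_pos_of_nonneg_of_pos (hA.posSemidef.dotProduct_mulVec_nonneg _)
        (hB.dotProduct_mulVec_pos h)

lemma posDef_submatrix_equiv {m : Type*} [Fintype m] [DecidableEq m]
    {A : Matrix n n ℂ} (hA : A.PosDef) (e : m ≃ n) :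
    (A.submatrix e e).PosDef := by
  rw [Matrix.posDef_iff_dotProduct_mulVec]
  constructor
  · unfold Matrix.IsHermitian
    rw [Matrix.conjTranspose_submatrix, hA.1.eq]
  · intro x hx
    rw [Matrix.submatrix_mulVec_equiv]
    have key : star x ⬝ᵥ ((A *ᵥ (x ∘ e.symm)) ∘ e) = star (x ∘ e.symm) ⬝ᵥ (A *ᵥ (x ∘ e.symm)) := by
      simp only [dotProduct]
      rw [← Equiv.sum_comp e (fun j => star (x ∘ e.symm) j * (A *ᵥ (x ∘ e.symm)) j)]
      simp [Pi.star_apply]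
    rw [key]
    apply hA.dotProduct_mulVec_pos
    intro h0
    apply hx
    funext i
    have := congrFun h0 (e i)
    simpa using this

end AuxPosDef

section AuxApplyFun

variable {n : Type*} [Fintype n] [DecidableEq n]

/-- Every Hermitian matrix has a unitary diagonalization with real diagonal. -/
lemma exists_spectral {A : Matrix n n ℂ} (hA : A.IsHermitian) :
    ∃ U ∈ Matrix.unitaryGroup n ℂ, ∃ g : n → ℝ,
      A = U * Matrix.diagonal (fun i => (g i : ℂ)) * star U := by
  refine ⟨hA.eigenvectorUnitary, (hA.eigenvectorUnitary).2, hA.eigenvalues, ?_⟩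
  have := hA.spectral_theorem
  rw [Unitary.conjStarAlgAut_apply] at this
  convert this using 3 <;> rfl

lemma applyFun_isHermitian (f : ℝ → ℝ) {A : Matrix n n ℂ} (hA : A.IsHermitian) :
    (applyFun f A).IsHermitian := by
  obtain ⟨U, hU, g, hdec⟩ := exists_spectral hA
  rw [applyFun_eq_conj f U hU g hdec]
  apply Matrix.isHermitian_mul_mul_conjTranspose
  exact Matrix.isHermitian_diagonal_of_self_adjoint _ (by
    funext i; simpa using Complex.conj_ofReal (f (g i)))

lemma applyFun_unitary_conj (f : ℝ → ℝ) {A : Matrix n n ℂ} (hA : A.IsHermitian)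
    (W : Matrix n n ℂ) (hW : W ∈ Matrix.unitaryGroup n ℂ) :
    applyFun f (W * A * star W) = W * applyFun f A * star W := by
  obtain ⟨U, hU, g, hdec⟩ := exists_spectral hA
  have hWU : W * U ∈ Matrix.unitaryGroup n ℂ := mul_mem hW hU
  have hdec2 : W * A * star W
      = (W * U) * Matrix.diagonal (fun i => (g i : ℂ)) * star (W * U) := by
    rw [hdec, Matrix.star_mul]
    noncomm_ring
  rw [applyFun_eq_conj f (W * U) hWU g hdec2, applyFun_eq_conj f U hU g hdec, Matrix.star_mul]
  noncomm_ring

lemma applyFun_fromBlocks {m₁ m₂ : Type*} [Fintype m₁] [Fintype m₂]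
    [DecidableEq m₁] [DecidableEq m₂] (f : ℝ → ℝ)
    {A : Matrix m₁ m₁ ℂ} {B : Matrix m₂ m₂ ℂ}
    (hA : A.IsHermitian) (hB : B.IsHermitian) :
    applyFun f (Matrix.fromBlocks A 0 0 B)
      = Matrix.fromBlocks (applyFun f A) 0 0 (applyFun f B) := by
  obtain ⟨U₁, hU₁, g₁, hdec₁⟩ := exists_spectral hA
  obtain ⟨U₂, hU₂, g₂, hdec₂⟩ := exists_spectral hB
  set U : Matrix (m₁ ⊕ m₂) (m₁ ⊕ m₂) ℂ := Matrix.fromBlocks U₁ 0 0 U₂ with hU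
  have hstarU : star U = Matrix.fromBlocks (star U₁) 0 0 (star U₂) := by
    rw [hU]
    show (Matrix.fromBlocks U₁ 0 0 U₂)ᴴ = _
    rw [Matrix.fromBlocks_conjTranspose]
    simp [Matrix.star_eq_conjTranspose]
  have hUmem : U ∈ Matrix.unitaryGroup (m₁ ⊕ m₂) ℂ := by
    rw [Matrix.mem_unitaryGroup_iff']
    rw [hstarU, hU, Matrix.fromBlocks_multiply]
    have e₁ : star U₁ * U₁ = 1 := Matrix.mem_unitaryGroup_iff'.mp hU₁
    have e₂ : star U₂ * U₂ = 1 := Matrix.mem_unitaryGroup_iff'.mp hU₂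
    simp [e₁, e₂, Matrix.fromBlocks_one]
  set g : m₁ ⊕ m₂ → ℝ := Sum.elim g₁ g₂ with hg
  have hdiag : ∀ h : ℝ → ℝ, Matrix.diagonal (fun i => ((h (g i) : ℝ) : ℂ))
      = Matrix.fromBlocks (Matrix.diagonal fun i => ((h (g₁ i) : ℝ) : ℂ)) 0 0
          (Matrix.diagonal fun i => ((h (g₂ i) : ℝ) : ℂ)) := by
    intro h
    rw [Matrix.fromBlocks_diagonal]
    congr 1
    funext i
    cases i <;> rfl
  have hdec : Matrix.fromBlocks A 0 0 B
      = U * Matrix.diagonal (fun i => (g i : ℂ)) * star U := by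
    have := hdiag id
    simp only [id] at this
    rw [this, hstarU, hU, Matrix.fromBlocks_multiply, Matrix.fromBlocks_multiply]
    simp [hdec₁, hdec₂]
  rw [applyFun_eq_conj f U hUmem g hdec, applyFun_eq_conj f U₁ hU₁ g₁ hdec₁,
    applyFun_eq_conj f U₂ hU₂ g₂ hdec₂, hdiag f, hstarU, hU,
    Matrix.fromBlocks_multiply, Matrix.fromBlocks_multiply]
  simp

lemma applyFun_submatrix_equiv {m : Type*} [Fintype m] [DecidableEq m]
    (f : ℝ → ℝ) {A : Matrix n n ℂ} (hA : A.IsHermitian) (e : m ≃ n) :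
    applyFun f (A.submatrix e e) = (applyFun f A).submatrix e e := by
  obtain ⟨U, hU, g, hdec⟩ := exists_spectral hA
  have hsub : ∀ h : ℝ → ℝ,
      (U * Matrix.diagonal (fun i => ((h (g i) : ℝ) : ℂ)) * star U).submatrix e e
      = (U.submatrix e e) * Matrix.diagonal (fun i => ((h (g (e i)) : ℝ) : ℂ))
          * star (U.submatrix e e) := by
    intro h
    have hdiagsub : (Matrix.diagonal fun i => ((h (g (e i)) : ℝ) : ℂ))
        = (Matrix.diagonal fun i => ((h (g i) : ℝ) : ℂ)).submatrix e e := by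
      rw [Matrix.submatrix_diagonal_equiv]
      rfl
    have hstar : star (U.submatrix ⇑e ⇑e) = (star U).submatrix ⇑e ⇑e := by
      simp [Matrix.star_eq_conjTranspose]
    rw [hdiagsub, hstar, Matrix.submatrix_mul_equiv, Matrix.submatrix_mul_equiv]
  have hUsub : U.submatrix e e ∈ Matrix.unitaryGroup m ℂ := by
    rw [Matrix.mem_unitaryGroup_iff']
    have : star (U.submatrix e e) = (star U).submatrix e e := by
      simp [Matrix.star_eq_conjTranspose]
    rw [this, Matrix.submatrix_mul_equiv, Matrix.mem_unitaryGroup_iff'.mp hU,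
      Matrix.submatrix_one_equiv]
  have hdecsub : A.submatrix e e
      = (U.submatrix e e) * Matrix.diagonal (fun i => ((g (e i) : ℝ) : ℂ))
          * star (U.submatrix e e) := by
    rw [hdec]
    have := hsub id
    simpa using this
  rw [applyFun_eq_conj f _ hUsub _ hdecsub, applyFun_eq_conj f U hU g hdec, hsub f]

end AuxApplyFun


section Core

variable {m : Type*} [Fintype m] [DecidableEq m]

lemma core_ineq (f : ℝ → ℝ) (hf : OperatorConvexOn (Set.Ioi 0) f)
    (A₀ A₁ A₂ V₁ V₂ : Matrix m m ℂ)
    (h₁ : A₁.PosDef) (h₂ : A₂.PosDef)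
    (hiso : V₁ᴴ * V₁ + V₂ᴴ * V₂ = 1)
    (hA₀ : V₁ᴴ * A₁ * V₁ + V₂ᴴ * A₂ * V₂ = A₀)
    (x : m → ℂ) :
    (star x ⬝ᵥ (applyFun f A₀ *ᵥ x)).re ≤
      (star (V₁ *ᵥ x) ⬝ᵥ (applyFun f A₁ *ᵥ (V₁ *ᵥ x))).re +
      (star (V₂ *ᵥ x) ⬝ᵥ (applyFun f A₂ *ᵥ (V₂ *ᵥ x))).re := by
  classical
  obtain ⟨V, hVdef⟩ : ∃ V : Matrix (m ⊕ m) m ℂ, V = Matrix.fromRows V₁ V₂ := ⟨_, rfl⟩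
  have hVH : Vᴴ = Matrix.fromCols V₁ᴴ V₂ᴴ := by
    rw [hVdef]; exact Matrix.conjTranspose_fromRows_eq_fromCols_conjTranspose V₁ V₂
  have hVV : Vᴴ * V = 1 := by
    rw [hVH, hVdef, Matrix.fromCols_mul_fromRows, hiso]
  obtain ⟨A, hAdef⟩ : ∃ A : Matrix (m ⊕ m) (m ⊕ m) ℂ, A = Matrix.fromBlocks A₁ 0 0 A₂ :=
    ⟨_, rfl⟩
  have hApd : A.PosDef := by rw [hAdef]; exact posDef_fromBlocks h₁ h₂
  have hVAV : Vᴴ * A * V = A₀ := by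
    rw [hVH, hAdef, hVdef, Matrix.fromCols_mul_fromBlocks,
      Matrix.fromCols_mul_fromRows]
    simpa using hA₀
  obtain ⟨P, hPdef⟩ : ∃ P : Matrix (m ⊕ m) (m ⊕ m) ℂ, P = V * Vᴴ := ⟨_, rfl⟩
  have hPV : P * V = V := by rw [hPdef, Matrix.mul_assoc, hVV, Matrix.mul_one]
  have hVP : Vᴴ * P = Vᴴ := by rw [hPdef, ← Matrix.mul_assoc, hVV, Matrix.one_mul]
  obtain ⟨D, hDdef⟩ : ∃ D : Matrix (m ⊕ m) (m ⊕ m) ℂ, D = 1 - P := ⟨_, rfl⟩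
  have hPH : Pᴴ = P := by
    rw [hPdef, Matrix.conjTranspose_mul, Matrix.conjTranspose_conjTranspose]
  have hDH : Dᴴ = D := by
    rw [hDdef, Matrix.conjTranspose_sub, Matrix.conjTranspose_one, hPH]
  have hDV : D * V = 0 := by
    rw [hDdef, Matrix.sub_mul, hPV, Matrix.one_mul, sub_self]
  have hVD : Vᴴ * D = 0 := by
    rw [hDdef, Matrix.mul_sub, hVP, Matrix.mul_one, sub_self]
  have hDD : D * D = D := by
    rw [hDdef, Matrix.sub_mul, Matrix.mul_sub, Matrix.mul_sub, Matrix.one_mul, Matrix.mul_one,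
      Matrix.one_mul, hPdef, Matrix.mul_assoc V Vᴴ (V * Vᴴ), ← Matrix.mul_assoc Vᴴ V Vᴴ,
      hVV, Matrix.one_mul]
    abel
  have hPD : P + D = 1 := by rw [hDdef]; abel
  obtain ⟨U₁, hU₁def⟩ : ∃ U : Matrix (m ⊕ (m ⊕ m)) (m ⊕ (m ⊕ m)) ℂ,
      U = Matrix.fromBlocks 0 Vᴴ V D := ⟨_, rfl⟩
  obtain ⟨U₂, hU₂def⟩ : ∃ U : Matrix (m ⊕ (m ⊕ m)) (m ⊕ (m ⊕ m)) ℂ,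
      U = Matrix.fromBlocks 0 Vᴴ V (-D) := ⟨_, rfl⟩
  have hU₁H : U₁ᴴ = U₁ := by
    rw [hU₁def, Matrix.fromBlocks_conjTranspose]
    simp [hDH]
  have hU₂H : U₂ᴴ = U₂ := by
    rw [hU₂def, Matrix.fromBlocks_conjTranspose]
    simp [hDH]
  have hU₁mem : U₁ ∈ Matrix.unitaryGroup (m ⊕ (m ⊕ m)) ℂ := by
    rw [Matrix.mem_unitaryGroup_iff', Matrix.star_eq_conjTranspose, hU₁H, hU₁def,
      Matrix.fromBlocks_multiply]
    simp only [Matrix.mul_zero, Matrix.zero_mul, hVV, hVD, hDV, zero_add, add_zero, hDD]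
    rw [← hPdef, hPD, Matrix.fromBlocks_one]
  have hU₂mem : U₂ ∈ Matrix.unitaryGroup (m ⊕ (m ⊕ m)) ℂ := by
    rw [Matrix.mem_unitaryGroup_iff', Matrix.star_eq_conjTranspose, hU₂H, hU₂def,
      Matrix.fromBlocks_multiply]
    simp only [Matrix.mul_zero, Matrix.zero_mul, hVV, Matrix.mul_neg, Matrix.neg_mul,
      hVD, hDV, neg_zero, zero_add, add_zero, hDD, neg_neg]
    rw [← hPdef, hPD, Matrix.fromBlocks_one]
  obtain ⟨M, hMdef⟩ : ∃ M : Matrix (m ⊕ (m ⊕ m)) (m ⊕ (m ⊕ m)) ℂ,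
      M = Matrix.fromBlocks 1 0 0 A := ⟨_, rfl⟩
  have hMpd : M.PosDef := by rw [hMdef]; exact posDef_fromBlocks Matrix.PosDef.one hApd
  obtain ⟨E, hEdef⟩ : ∃ E : Matrix (m ⊕ m) (m ⊕ m) ℂ, E = V * Vᴴ + D * (A * D) := ⟨_, rfl⟩
  obtain ⟨B₁, hB₁def⟩ : ∃ B : Matrix (m ⊕ (m ⊕ m)) (m ⊕ (m ⊕ m)) ℂ, B = U₁ᴴ * M * U₁ :=
    ⟨_, rfl⟩
  obtain ⟨B₂, hB₂def⟩ : ∃ B : Matrix (m ⊕ (m ⊕ m)) (m ⊕ (m ⊕ m)) ℂ, B = U₂ᴴ * M * U₂ :=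
    ⟨_, rfl⟩
  have hU₁unit : IsUnit U₁ := ⟨⟨U₁, star U₁, Matrix.mem_unitaryGroup_iff.mp hU₁mem,
    Matrix.mem_unitaryGroup_iff'.mp hU₁mem⟩, rfl⟩
  have hU₂unit : IsUnit U₂ := ⟨⟨U₂, star U₂, Matrix.mem_unitaryGroup_iff.mp hU₂mem,
    Matrix.mem_unitaryGroup_iff'.mp hU₂mem⟩, rfl⟩
  have hB₁pd : B₁.PosDef := by rw [hB₁def]; exact posDef_conj_isUnit hMpd hU₁unit
  have hB₂pd : B₂.PosDef := by rw [hB₂def]; exact posDef_conj_isUnit hMpd hU₂unit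
  have hB₁blocks : B₁ = Matrix.fromBlocks A₀ (Vᴴ * (A * D)) (D * (A * V)) E := by
    rw [hB₁def, hU₁H, hU₁def, hMdef, Matrix.fromBlocks_multiply, Matrix.fromBlocks_multiply,
      ← hVAV, hEdef]
    simp only [Matrix.mul_zero, Matrix.zero_mul, Matrix.mul_one, Matrix.one_mul,
      zero_add, add_zero, Matrix.mul_assoc]
  have hB₂blocks : B₂ = Matrix.fromBlocks A₀ (-(Vᴴ * (A * D))) (-(D * (A * V))) E := by
    rw [hB₂def, hU₂H, hU₂def, hMdef, Matrix.fromBlocks_multiply, Matrix.fromBlocks_multiply,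
      ← hVAV, hEdef]
    simp only [Matrix.mul_zero, Matrix.zero_mul, Matrix.mul_one, Matrix.one_mul,
      zero_add, add_zero, Matrix.mul_neg, Matrix.neg_mul, neg_zero, neg_neg, Matrix.mul_assoc]
  have hcomb : (1/2 : ℂ) • B₁ + (1/2 : ℂ) • B₂ = Matrix.fromBlocks A₀ 0 0 E := by
    rw [hB₁blocks, hB₂blocks]
    ext i j
    rcases i with i | i <;> rcases j with j | j <;>
      simp [Matrix.fromBlocks, Matrix.add_apply, Matrix.smul_apply, smul_eq_mul,
        Matrix.neg_apply] <;> ring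
  have hA₀H : A₀.IsHermitian := by
    rw [← hVAV]; exact Matrix.isHermitian_conjTranspose_mul_mul V hApd.1
  have hEH : E.IsHermitian := by
    rw [hEdef]
    apply Matrix.IsHermitian.add
    · exact Matrix.isHermitian_mul_conjTranspose_self V
    · have h' := Matrix.isHermitian_conjTranspose_mul_mul D hApd.1
      rw [hDH] at h'
      rw [← Matrix.mul_assoc]
      exact h'
  have hFBH : (Matrix.fromBlocks A₀ 0 0 E).IsHermitian := by
    unfold Matrix.IsHermitian
    rw [Matrix.fromBlocks_conjTranspose]
    simp [hA₀H.eq, hEH.eq]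
  -- transport through the operator convexity hypothesis
  obtain ⟨e⟩ : Nonempty ((m ⊕ (m ⊕ m)) ≃ Fin (Fintype.card (m ⊕ (m ⊕ m)))) :=
    ⟨Fintype.equivFin _⟩
  have hR₁pd : (B₁.submatrix e.symm e.symm).PosDef := posDef_submatrix_equiv hB₁pd e.symm
  have hR₂pd : (B₂.submatrix e.symm e.symm).PosDef := posDef_submatrix_equiv hB₂pd e.symm
  have hPSD0 := hf (Fintype.card (m ⊕ (m ⊕ m))) (B₁.submatrix e.symm e.symm)
    (B₂.submatrix e.symm e.symm) hR₁pd.1 hR₂pd.1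
    (fun i => Set.mem_Ioi.mpr (hR₁pd.eigenvalues_pos i))
    (fun i => Set.mem_Ioi.mpr (hR₂pd.eigenvalues_pos i))
    (1/2) (by norm_num) (by norm_num)
  have hc1 : (((1/2 : ℝ)) : ℂ) = (1/2 : ℂ) := by norm_num
  have hc2 : ((1 - (1/2 : ℝ) : ℝ) : ℂ) = (1/2 : ℂ) := by norm_num
  rw [hc1, hc2] at hPSD0
  have hfR₁ : applyFun f (B₁.submatrix e.symm e.symm)
      = (applyFun f B₁).submatrix e.symm e.symm := applyFun_submatrix_equiv f hB₁pd.1 e.symm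
  have hfR₂ : applyFun f (B₂.submatrix e.symm e.symm)
      = (applyFun f B₂).submatrix e.symm e.symm := applyFun_submatrix_equiv f hB₂pd.1 e.symm
  have hcomb' : (1/2 : ℂ) • B₁.submatrix e.symm e.symm
      + (1/2 : ℂ) • B₂.submatrix e.symm e.symm
      = (Matrix.fromBlocks A₀ 0 0 E).submatrix e.symm e.symm := by
    rw [← hcomb]
    rfl
  rw [hfR₁, hfR₂, hcomb', applyFun_submatrix_equiv f hFBH e.symm] at hPSD0
  have hT : ((1/2 : ℂ) • applyFun f B₁ + (1/2 : ℂ) • applyFun f B₂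
      - applyFun f (Matrix.fromBlocks A₀ 0 0 E)).PosSemidef := by
    have h' := hPSD0.submatrix ⇑e
    have heq : ((1/2:ℂ) • (applyFun f B₁).submatrix ⇑e.symm ⇑e.symm
        + (1/2:ℂ) • (applyFun f B₂).submatrix ⇑e.symm ⇑e.symm
        - (applyFun f (Matrix.fromBlocks A₀ 0 0 E)).submatrix ⇑e.symm ⇑e.symm).submatrix ⇑e ⇑e
        = (1/2:ℂ) • applyFun f B₁ + (1/2:ℂ) • applyFun f B₂
          - applyFun f (Matrix.fromBlocks A₀ 0 0 E) := by
      ext i j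
      simp [Matrix.submatrix_apply, Matrix.add_apply, Matrix.sub_apply, Matrix.smul_apply]
    rwa [heq] at h'
  -- evaluate the quadratic form at `Sum.elim x 0`
  obtain ⟨y, hydef⟩ : ∃ y : (m ⊕ (m ⊕ m)) → ℂ, y = Sum.elim x (0 : (m ⊕ m) → ℂ) := ⟨_, rfl⟩
  have h0 := hT.dotProduct_mulVec_nonneg y
  -- value on the `applyFun f (fromBlocks A₀ 0 0 E)` part
  have hq₀ : star y ⬝ᵥ (applyFun f (Matrix.fromBlocks A₀ 0 0 E) *ᵥ y)
      = star x ⬝ᵥ (applyFun f A₀ *ᵥ x) := by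
    rw [applyFun_fromBlocks f hA₀H hEH, hydef, Matrix.fromBlocks_mulVec, star_sum_elim]
    simp only [Sum.elim_comp_inl, Sum.elim_comp_inr, Matrix.mulVec_zero, Matrix.zero_mulVec,
      add_zero, zero_add, star_zero]
    rw [sumElim_dotProduct_sumElim]
    simp
  -- value on the conjugated parts
  have hUy : ∀ (W : Matrix (m ⊕ m) (m ⊕ m) ℂ),
      Matrix.fromBlocks 0 Vᴴ V W *ᵥ y = Sum.elim (0 : m → ℂ) (V *ᵥ x) := by
    intro W
    rw [hydef, Matrix.fromBlocks_mulVec]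
    simp only [Sum.elim_comp_inl, Sum.elim_comp_inr, Matrix.mulVec_zero, Matrix.zero_mulVec,
      add_zero, zero_add]
  have hVx : V *ᵥ x = Sum.elim (V₁ *ᵥ x) (V₂ *ᵥ x) := by
    rw [hVdef]; exact Matrix.fromRows_mulVec V₁ V₂ x
  have hqA : star (V *ᵥ x) ⬝ᵥ (applyFun f A *ᵥ (V *ᵥ x))
      = star (V₁ *ᵥ x) ⬝ᵥ (applyFun f A₁ *ᵥ (V₁ *ᵥ x))
        + star (V₂ *ᵥ x) ⬝ᵥ (applyFun f A₂ *ᵥ (V₂ *ᵥ x)) := by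
    rw [hAdef, applyFun_fromBlocks f h₁.1 h₂.1, hVx, star_sum_elim,
      Matrix.fromBlocks_mulVec]
    simp only [Sum.elim_comp_inl, Sum.elim_comp_inr, Matrix.zero_mulVec, add_zero, zero_add]
    rw [sumElim_dotProduct_sumElim]
  have hfM : applyFun f M
      = Matrix.fromBlocks (applyFun f (1 : Matrix m m ℂ)) 0 0 (applyFun f A) := by
    rw [hMdef]; exact applyFun_fromBlocks f Matrix.isHermitian_one hApd.1
  obtain ⟨c₀, hc₀⟩ : ∃ c, c = star x ⬝ᵥ (applyFun f A₀ *ᵥ x) := ⟨_, rfl⟩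
  obtain ⟨c₁, hc₁⟩ : ∃ c, c = star (V₁ *ᵥ x) ⬝ᵥ (applyFun f A₁ *ᵥ (V₁ *ᵥ x)) := ⟨_, rfl⟩
  obtain ⟨c₂, hc₂⟩ : ∃ c, c = star (V₂ *ᵥ x) ⬝ᵥ (applyFun f A₂ *ᵥ (V₂ *ᵥ x)) := ⟨_, rfl⟩
  have hq : ∀ (U : Matrix (m ⊕ (m ⊕ m)) (m ⊕ (m ⊕ m)) ℂ) (W : Matrix (m ⊕ m) (m ⊕ m) ℂ),
      U = Matrix.fromBlocks 0 Vᴴ V W →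
      star y ⬝ᵥ ((Uᴴ * applyFun f M * U) *ᵥ y) = c₁ + c₂ := by
    intro U W hUdef
    rw [conj_dot_eq, hUdef, hUy W, hfM, Matrix.fromBlocks_mulVec, star_sum_elim]
    simp only [Sum.elim_comp_inl, Sum.elim_comp_inr, Matrix.mulVec_zero, Matrix.zero_mulVec,
      add_zero, zero_add, star_zero]
    rw [sumElim_dotProduct_sumElim]
    simp only [zero_dotProduct, zero_add]
    rw [hqA, ← hc₁, ← hc₂]
  have hstar₁ : star U₁ = U₁ := by rw [Matrix.star_eq_conjTranspose, hU₁H]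
  have hstar₂ : star U₂ = U₂ := by rw [Matrix.star_eq_conjTranspose, hU₂H]
  have hfB₁ : applyFun f B₁ = U₁ᴴ * applyFun f M * U₁ := by
    rw [hB₁def, hU₁H]
    calc applyFun f (U₁ * M * U₁) = applyFun f (U₁ * M * star U₁) := by rw [hstar₁]
      _ = U₁ * applyFun f M * star U₁ := applyFun_unitary_conj f hMpd.1 U₁ hU₁mem
      _ = U₁ * applyFun f M * U₁ := by rw [hstar₁]
  have hfB₂ : applyFun f B₂ = U₂ᴴ * applyFun f M * U₂ := by
    rw [hB₂def, hU₂H]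
    calc applyFun f (U₂ * M * U₂) = applyFun f (U₂ * M * star U₂) := by rw [hstar₂]
      _ = U₂ * applyFun f M * star U₂ := applyFun_unitary_conj f hMpd.1 U₂ hU₂mem
      _ = U₂ * applyFun f M * U₂ := by rw [hstar₂]
  have hqB₁ : star y ⬝ᵥ (applyFun f B₁ *ᵥ y) = c₁ + c₂ := by
    rw [hfB₁]; exact hq U₁ D hU₁def
  have hqB₂ : star y ⬝ᵥ (applyFun f B₂ *ᵥ y) = c₁ + c₂ := by
    rw [hfB₂]; exact hq U₂ (-D) hU₂def
  have h0 := hT.dotProduct_mulVec_nonneg y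
  have hexp : star y ⬝ᵥ (((1/2 : ℂ) • applyFun f B₁ + (1/2 : ℂ) • applyFun f B₂
      - applyFun f (Matrix.fromBlocks A₀ 0 0 E)) *ᵥ y)
      = (1/2 : ℂ) * (star y ⬝ᵥ (applyFun f B₁ *ᵥ y))
        + (1/2 : ℂ) * (star y ⬝ᵥ (applyFun f B₂ *ᵥ y))
        - star y ⬝ᵥ (applyFun f (Matrix.fromBlocks A₀ 0 0 E) *ᵥ y) := by
    rw [Matrix.sub_mulVec, Matrix.add_mulVec, Matrix.smul_mulVec,
      Matrix.smul_mulVec]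
    rw [dotProduct_sub, dotProduct_add, dotProduct_smul,
      dotProduct_smul]
    simp [smul_eq_mul]
  rw [hexp, hqB₁, hqB₂, hq₀, ← hc₀] at h0
  have h0' : (0 : ℂ) ≤ c₁ + c₂ - c₀ := by
    have harith : (1/2 : ℂ) * (c₁ + c₂) + (1/2 : ℂ) * (c₁ + c₂) - c₀ = c₁ + c₂ - c₀ := by
      ring
    rwa [harith] at h0
  rw [Complex.le_def] at h0'
  have hre := h0'.1
  simp only [Complex.zero_re, Complex.sub_re, Complex.add_re] at hre
  rw [← hc₀, ← hc₁, ← hc₂]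
  linarith

end Core


section Kron

variable {n : Type*} [Fintype n] [DecidableEq n]

lemma kron_conjTranspose {l m o p : Type*} (A : Matrix l m ℂ) (B : Matrix o p ℂ) :
    (A ⊗ₖ B)ᴴ = Aᴴ ⊗ₖ Bᴴ := by
  ext ⟨i, j⟩ ⟨k, l⟩
  simp only [Matrix.conjTranspose_apply, Matrix.kroneckerMap_apply, star_mul']

lemma kron_mulVec_vecOf (A B X : Matrix n n ℂ) :
    (A ⊗ₖ B) *ᵥ vecOf X = vecOf (A * X * Bᵀ) := by
  funext p
  obtain ⟨i, j⟩ := p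
  show ∑ q : n × n, (A ⊗ₖ B) (i, j) q * X q.1 q.2 = (A * X * Bᵀ) i j
  rw [Fintype.sum_prod_type]
  rw [Matrix.mul_apply]
  have : ∀ l, (A * X) i l * Bᵀ l j = ∑ k, A i k * B j l * X k l := by
    intro l
    rw [Matrix.mul_apply, Finset.sum_mul]
    apply Finset.sum_congr rfl
    intro k _
    simp [Matrix.transpose_apply]
    ring
  rw [Finset.sum_congr rfl (fun l _ => this l), Finset.sum_comm]
  apply Finset.sum_congr rfl
  intro k _
  apply Finset.sum_congr rfl
  intro l _
  simp [Matrix.kroneckerMap_apply]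

lemma exists_spectral_posDef {A : Matrix n n ℂ} (hA : A.PosDef) :
    ∃ U ∈ Matrix.unitaryGroup n ℂ, ∃ g : n → ℝ, (∀ i, 0 < g i) ∧
      A = U * Matrix.diagonal (fun i => (g i : ℂ)) * star U := by
  refine ⟨hA.1.eigenvectorUnitary, (hA.1.eigenvectorUnitary).2, hA.1.eigenvalues,
    fun i => hA.eigenvalues_pos i, ?_⟩
  have := hA.1.spectral_theorem
  rw [Unitary.conjStarAlgAut_apply] at this
  convert this using 3 <;> rfl

lemma posDef_kronecker {m : Type*} [Fintype m] [DecidableEq m]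
    {A : Matrix n n ℂ} {B : Matrix m m ℂ} (hA : A.PosDef) (hB : B.PosDef) :
    (A ⊗ₖ B).PosDef := by
  obtain ⟨U, hU, g, hg, hAdec⟩ := exists_spectral_posDef hA
  obtain ⟨W, hW, h, hh, hBdec⟩ := exists_spectral_posDef hB
  have hUW : (U ⊗ₖ W) * (star U ⊗ₖ star W) = 1 := by
    rw [← Matrix.mul_kronecker_mul, Matrix.mem_unitaryGroup_iff.mp hU,
      Matrix.mem_unitaryGroup_iff.mp hW, Matrix.one_kronecker_one]
  have hWU : (star U ⊗ₖ star W) * (U ⊗ₖ W) = 1 := by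
    rw [← Matrix.mul_kronecker_mul, Matrix.mem_unitaryGroup_iff'.mp hU,
      Matrix.mem_unitaryGroup_iff'.mp hW, Matrix.one_kronecker_one]
  have hdec : A ⊗ₖ B = (star U ⊗ₖ star W)ᴴ *
      Matrix.diagonal (fun p : n × m => ((g p.1 * h p.2 : ℝ) : ℂ)) * (star U ⊗ₖ star W) := by
    have hH : (star U ⊗ₖ star W)ᴴ = U ⊗ₖ W := by
      rw [kron_conjTranspose]
      simp [Matrix.star_eq_conjTranspose]
    rw [hH, hAdec, hBdec, Matrix.mul_kronecker_mul, Matrix.mul_kronecker_mul,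
      Matrix.diagonal_kronecker_diagonal]
    congr 1
    · congr 1
      funext p
      push_cast
      ring
  rw [hdec]
  apply posDef_conj_isUnit
  · apply Matrix.PosDef.diagonal
    intro p
    have : (0 : ℝ) < g p.1 * h p.2 := mul_pos (hg p.1) (hh p.2)
    exact_mod_cast this
  · exact ⟨⟨star U ⊗ₖ star W, U ⊗ₖ W, hWU, hUW⟩, rfl⟩

lemma msqrt_mul_self {A : Matrix n n ℂ} (hA : A.PosSemidef) : msqrt A * msqrt A = A := by
  rw [msqrt, dif_pos hA]
  have hU : star (hA.1.eigenvectorUnitary : Matrix n n ℂ) * hA.1.eigenvectorUnitary = 1 :=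
    Matrix.mem_unitaryGroup_iff'.mp hA.1.eigenvectorUnitary.2
  have hD : Matrix.diagonal (((↑) ∘ (Real.sqrt ·) ∘ hA.1.eigenvalues : n → ℂ)) *
      Matrix.diagonal (((↑) ∘ (Real.sqrt ·) ∘ hA.1.eigenvalues : n → ℂ))
      = Matrix.diagonal (RCLike.ofReal ∘ hA.1.eigenvalues : n → ℂ) := by
    rw [Matrix.diagonal_mul_diagonal]
    congr 1
    funext i
    simp only [Function.comp_apply]
    rw [← Complex.ofReal_mul, Real.mul_self_sqrt (hA.eigenvalues_nonneg i)]
    rfl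
  have hspec := hA.1.spectral_theorem
  rw [Unitary.conjStarAlgAut_apply] at hspec
  calc _ = (hA.1.eigenvectorUnitary : Matrix n n ℂ) *
        (Matrix.diagonal (((↑) ∘ (Real.sqrt ·) ∘ hA.1.eigenvalues : n → ℂ)) *
          Matrix.diagonal (((↑) ∘ (Real.sqrt ·) ∘ hA.1.eigenvalues : n → ℂ))) *
        star (hA.1.eigenvectorUnitary : Matrix n n ℂ) := by
        simp only [Matrix.mul_assoc]
        rw [← Matrix.mul_assoc (star (hA.1.eigenvectorUnitary : Matrix n n ℂ)), hU,
          Matrix.one_mul]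
    _ = A := by rw [hD]; exact hspec.symm

lemma msqrt_isHermitian {A : Matrix n n ℂ} (hA : A.PosSemidef) : (msqrt A)ᴴ = msqrt A := by
  rw [msqrt, dif_pos hA]
  exact Matrix.isHermitian_mul_mul_conjTranspose (hA.1.eigenvectorUnitary : Matrix n n ℂ)
    (Matrix.isHermitian_diagonal_of_self_adjoint
      (((↑) ∘ (Real.sqrt ·) ∘ hA.1.eigenvalues : n → ℂ)) (by funext i; simp))

lemma msqrt_isUnit_det {A : Matrix n n ℂ} (hA : A.PosDef) : IsUnit (msqrt A).det := by
  have h2 : (msqrt A).det * (msqrt A).det = A.det := by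
    rw [← Matrix.det_mul, msqrt_mul_self hA.posSemidef]
  have : A.det ≠ 0 := by
    have := hA.det_pos
    exact ne_of_gt this
  rw [isUnit_iff_ne_zero]
  intro h0
  rw [h0, mul_zero] at h2
  exact this h2.symm

end Kron


/-- sub-additivity of the quantum f-relative entropy. -/
theorem Srel_subadditive {d : ℕ} (f : ℝ → ℝ)
    (hf : OperatorConvexOn (Set.Ioi 0) f)
    (ρ₁ ρ₂ σ₁ σ₂ : Matrix (Fin d) (Fin d) ℂ)
    (hρ1 : ρ₁.PosDef) (hρ2 : ρ₂.PosDef) (hσ1 : σ₁.PosDef) (hσ2 : σ₂.PosDef) :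
    Srel f (ρ₁ + ρ₂) (σ₁ + σ₂) ≤ Srel f ρ₁ σ₁ + Srel f ρ₂ σ₂ := by
  classical
  have hρ : (ρ₁ + ρ₂).PosDef := hρ1.add hρ2
  set s : Matrix (Fin d) (Fin d) ℂ := msqrt (ρ₁ + ρ₂) with hs
  set s₁ : Matrix (Fin d) (Fin d) ℂ := msqrt ρ₁ with hs₁
  set s₂ : Matrix (Fin d) (Fin d) ℂ := msqrt ρ₂ with hs₂
  have hs2 : s * s = ρ₁ + ρ₂ := msqrt_mul_self hρ.posSemidef
  have hs₁2 : s₁ * s₁ = ρ₁ := msqrt_mul_self hρ1.posSemidef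
  have hs₂2 : s₂ * s₂ = ρ₂ := msqrt_mul_self hρ2.posSemidef
  have hsH : sᴴ = s := msqrt_isHermitian hρ.posSemidef
  have hs₁H : s₁ᴴ = s₁ := msqrt_isHermitian hρ1.posSemidef
  have hs₂H : s₂ᴴ = s₂ := msqrt_isHermitian hρ2.posSemidef
  have hsu : IsUnit s.det := msqrt_isUnit_det hρ
  have hs₁u : IsUnit s₁.det := msqrt_isUnit_det hρ1
  have hs₂u : IsUnit s₂.det := msqrt_isUnit_det hρ2
  have hssinv : s * s⁻¹ = 1 := Matrix.mul_nonsing_inv s hsu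
  have hsinvs : s⁻¹ * s = 1 := Matrix.nonsing_inv_mul s hsu
  have hs₁inv : s₁ * s₁⁻¹ = 1 := Matrix.mul_nonsing_inv s₁ hs₁u
  have hs₁inv' : s₁⁻¹ * s₁ = 1 := Matrix.nonsing_inv_mul s₁ hs₁u
  have hs₂inv : s₂ * s₂⁻¹ = 1 := Matrix.mul_nonsing_inv s₂ hs₂u
  have hs₂inv' : s₂⁻¹ * s₂ = 1 := Matrix.nonsing_inv_mul s₂ hs₂u
  have hsinvH : (s⁻¹)ᴴ = s⁻¹ := by rw [Matrix.conjTranspose_nonsing_inv, hsH]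
  have hρinv : (ρ₁ + ρ₂)⁻¹ = s⁻¹ * s⁻¹ := by rw [← hs2, Matrix.mul_inv_rev]
  have hρ₁inv : ρ₁⁻¹ = s₁⁻¹ * s₁⁻¹ := by rw [← hs₁2, Matrix.mul_inv_rev]
  have hρ₂inv : ρ₂⁻¹ = s₂⁻¹ * s₂⁻¹ := by rw [← hs₂2, Matrix.mul_inv_rev]
  -- the contraction matrices
  set C₁ : Matrix (Fin d) (Fin d) ℂ := s⁻¹ * s₁ with hC₁
  set C₂ : Matrix (Fin d) (Fin d) ℂ := s⁻¹ * s₂ with hC₂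
  have hC₁H : C₁ᴴ = s₁ * s⁻¹ := by rw [hC₁, Matrix.conjTranspose_mul, hsinvH, hs₁H]
  have hC₂H : C₂ᴴ = s₂ * s⁻¹ := by rw [hC₂, Matrix.conjTranspose_mul, hsinvH, hs₂H]
  have idCC : C₁ * C₁ᴴ + C₂ * C₂ᴴ = 1 := by
    rw [hC₁H, hC₂H, hC₁, hC₂]
    have e₁ : s⁻¹ * s₁ * (s₁ * s⁻¹) = s⁻¹ * ρ₁ * s⁻¹ := by rw [← hs₁2]; noncomm_ring
    have e₂ : s⁻¹ * s₂ * (s₂ * s⁻¹) = s⁻¹ * ρ₂ * s⁻¹ := by rw [← hs₂2]; noncomm_ring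
    rw [e₁, e₂]
    have : s⁻¹ * ρ₁ * s⁻¹ + s⁻¹ * ρ₂ * s⁻¹ = s⁻¹ * (ρ₁ + ρ₂) * s⁻¹ := by noncomm_ring
    rw [this, ← hs2, show s⁻¹ * (s * s) * s⁻¹ = (s⁻¹ * s) * (s * s⁻¹) from by noncomm_ring,
      hsinvs, hssinv, one_mul]
  have key₁ : s₁ * ρ₁⁻¹ * s₁ = 1 := by
    rw [hρ₁inv, show s₁ * (s₁⁻¹ * s₁⁻¹) * s₁ = (s₁ * s₁⁻¹) * (s₁⁻¹ * s₁) from by noncomm_ring,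
      hs₁inv, hs₁inv', one_mul]
  have key₂ : s₂ * ρ₂⁻¹ * s₂ = 1 := by
    rw [hρ₂inv, show s₂ * (s₂⁻¹ * s₂⁻¹) * s₂ = (s₂ * s₂⁻¹) * (s₂⁻¹ * s₂) from by noncomm_ring,
      hs₂inv, hs₂inv', one_mul]
  have idC₁ : C₁ * ρ₁⁻¹ * C₁ᴴ = (ρ₁ + ρ₂)⁻¹ := by
    rw [hC₁H, hC₁, show s⁻¹ * s₁ * ρ₁⁻¹ * (s₁ * s⁻¹) = s⁻¹ * (s₁ * ρ₁⁻¹ * s₁) * s⁻¹ from by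
      noncomm_ring, key₁, Matrix.mul_one, hρinv]
  have idC₂ : C₂ * ρ₂⁻¹ * C₂ᴴ = (ρ₁ + ρ₂)⁻¹ := by
    rw [hC₂H, hC₂, show s⁻¹ * s₂ * ρ₂⁻¹ * (s₂ * s⁻¹) = s⁻¹ * (s₂ * ρ₂⁻¹ * s₂) * s⁻¹ from by
      noncomm_ring, key₂, Matrix.mul_one, hρinv]
  have idsC₁ : s * C₁ = s₁ := by
    rw [hC₁, ← Matrix.mul_assoc, hssinv, Matrix.one_mul]
  have idsC₂ : s * C₂ = s₂ := by
    rw [hC₂, ← Matrix.mul_assoc, hssinv, Matrix.one_mul]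
  -- Kronecker level
  set V₁ : Matrix (Fin d × Fin d) (Fin d × Fin d) ℂ := (1 : Matrix (Fin d) (Fin d) ℂ) ⊗ₖ C₁ᵀ
    with hV₁
  set V₂ : Matrix (Fin d × Fin d) (Fin d × Fin d) ℂ := (1 : Matrix (Fin d) (Fin d) ℂ) ⊗ₖ C₂ᵀ
    with hV₂
  have hV₁H : V₁ᴴ = (1 : Matrix (Fin d) (Fin d) ℂ) ⊗ₖ (C₁ᵀ)ᴴ := by
    rw [hV₁, kron_conjTranspose, Matrix.conjTranspose_one]
  have hV₂H : V₂ᴴ = (1 : Matrix (Fin d) (Fin d) ℂ) ⊗ₖ (C₂ᵀ)ᴴ := by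
    rw [hV₂, kron_conjTranspose, Matrix.conjTranspose_one]
  have hCtH : ∀ C : Matrix (Fin d) (Fin d) ℂ, (Cᵀ)ᴴ = (Cᴴ)ᵀ := by
    intro C
    ext i j
    simp [Matrix.conjTranspose_apply, Matrix.transpose_apply]
  have hiso : V₁ᴴ * V₁ + V₂ᴴ * V₂ = 1 := by
    rw [hV₁H, hV₂H, hV₁, hV₂, ← Matrix.mul_kronecker_mul, ← Matrix.mul_kronecker_mul,
      Matrix.one_mul, hCtH, hCtH, ← Matrix.transpose_mul, ← Matrix.transpose_mul,
      ← Matrix.kronecker_add, ← Matrix.transpose_add, idCC, Matrix.transpose_one,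
      Matrix.one_kronecker_one]
  have hVAV : V₁ᴴ * (σ₁ ⊗ₖ (ρ₁⁻¹)ᵀ) * V₁ + V₂ᴴ * (σ₂ ⊗ₖ (ρ₂⁻¹)ᵀ) * V₂
      = (σ₁ + σ₂) ⊗ₖ (((ρ₁ + ρ₂)⁻¹)ᵀ) := by
    have t₁ : V₁ᴴ * (σ₁ ⊗ₖ (ρ₁⁻¹)ᵀ) * V₁ = σ₁ ⊗ₖ (((ρ₁ + ρ₂)⁻¹)ᵀ) := by
      rw [hV₁H, hV₁, ← Matrix.mul_kronecker_mul, ← Matrix.mul_kronecker_mul,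
        Matrix.one_mul, Matrix.mul_one, hCtH, ← Matrix.transpose_mul, ← Matrix.transpose_mul,
        show C₁ * (ρ₁⁻¹ * C₁ᴴ) = C₁ * ρ₁⁻¹ * C₁ᴴ from by noncomm_ring, idC₁]
    have t₂ : V₂ᴴ * (σ₂ ⊗ₖ (ρ₂⁻¹)ᵀ) * V₂ = σ₂ ⊗ₖ (((ρ₁ + ρ₂)⁻¹)ᵀ) := by
      rw [hV₂H, hV₂, ← Matrix.mul_kronecker_mul, ← Matrix.mul_kronecker_mul,
        Matrix.one_mul, Matrix.mul_one, hCtH, ← Matrix.transpose_mul, ← Matrix.transpose_mul,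
        show C₂ * (ρ₂⁻¹ * C₂ᴴ) = C₂ * ρ₂⁻¹ * C₂ᴴ from by noncomm_ring, idC₂]
    rw [t₁, t₂, ← Matrix.add_kronecker]
  have hVvec₁ : V₁ *ᵥ vecOf s = vecOf s₁ := by
    rw [hV₁, kron_mulVec_vecOf, Matrix.transpose_transpose, Matrix.one_mul, idsC₁]
  have hVvec₂ : V₂ *ᵥ vecOf s = vecOf s₂ := by
    rw [hV₂, kron_mulVec_vecOf, Matrix.transpose_transpose, Matrix.one_mul, idsC₂]
  have hA₁pd : (σ₁ ⊗ₖ (ρ₁⁻¹)ᵀ).PosDef := posDef_kronecker hσ1 hρ1.inv.transpose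
  have hA₂pd : (σ₂ ⊗ₖ (ρ₂⁻¹)ᵀ).PosDef := posDef_kronecker hσ2 hρ2.inv.transpose
  have hmain := core_ineq f hf ((σ₁ + σ₂) ⊗ₖ (((ρ₁ + ρ₂)⁻¹)ᵀ))
    (σ₁ ⊗ₖ (ρ₁⁻¹)ᵀ) (σ₂ ⊗ₖ (ρ₂⁻¹)ᵀ) V₁ V₂ hA₁pd hA₂pd hiso hVAV (vecOf s)
  rw [hVvec₁, hVvec₂] at hmain
  exact hmain
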